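/- arXiv:2501.11268 — 2 statements merged into one kernel-verified Lean document; each statement's English description precedes it below -/
import Mathlib

section
/- Let k ≤ N, z̄ ∈ ℝ^N with ‖z̄‖₀ = k, and c̄ ∈ ℝ, and set ξ̄_i = 1 − y_i(z̄^⊤ r_i + c̄) for i ∈ [m]. Suppose ∑_{i=1}^m y_i ξ̄_i = 0 and, for every index j with z̄_j ≠ 0, (G z̄)_j = 2C ∑_{i=1}^m ξ̄_i y_i (r_i)_j. Then (z̄, c̄) is a local minimizer of F(z, c) = (1/2) z^⊤ G z + C ∑_{i=1}^m (1 − y_i(z^⊤ r_i + c))² over the set {(z, c) ∈ ℝ^N × ℝ : ‖z‖₀ ≤ k}. -/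
open Matrix Finset

/-- If `(z̄, c̄)` with `‖z̄‖₀ = k` satisfies the Lu–Zhang stationarity
conditions for the least-squares `ℓ₀`-regularized QSVM (with `ξ̄_i = 1 − y_i(z̄ᵀr_i + c̄)`,
`∑ y_i ξ̄_i = 0`, and `(Gz̄)_j = 2C ∑ ξ̄_i y_i (r_i)_j` on the support of `z̄`), then
`(z̄, c̄)` is a local minimizer of
`F(z, c) = (1/2) zᵀGz + C ∑ (1 − y_i(zᵀr_i + c))²` over `{(z, c) : ‖z‖₀ ≤ k}`. -/
theorem lu_zhang_stationary_is_local_min_ls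
    (m N k : ℕ) (hm : 1 ≤ m) (hN : 1 ≤ N) (hk : k ≤ N)
    (r : Fin m → Fin N → ℝ) (y : Fin m → ℝ) (hy : ∀ i, y i = 1 ∨ y i = -1)
    (G : Matrix (Fin N) (Fin N) ℝ) (hG : G.PosSemidef)
    (C : ℝ) (hC : 0 < C)
    (zbar : Fin N → ℝ) (cbar : ℝ)
    (hsupp : (Finset.univ.filter fun j => zbar j ≠ 0).card = k)
    (ξbar : Fin m → ℝ)
    (hξ : ∀ i, ξbar i = 1 - y i * (zbar ⬝ᵥ r i + cbar))
    (hsum : ∑ i, y i * ξbar i = 0)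
    (hstat : ∀ j, zbar j ≠ 0 → (G *ᵥ zbar) j = 2 * C * ∑ i, ξbar i * y i * r i j) :
    IsLocalMinOn
      (fun p : (Fin N → ℝ) × ℝ =>
        (1 / 2) * (p.1 ⬝ᵥ (G *ᵥ p.1)) + C * ∑ i, (1 - y i * (p.1 ⬝ᵥ r i + p.2)) ^ 2)
      {p : (Fin N → ℝ) × ℝ | (Finset.univ.filter fun j => p.1 j ≠ 0).card ≤ k}
      (zbar, cbar) := by
  -- symmetry of G
  have hGs : ∀ a b, G a b = G b a := by
    intro a b
    have := congrFun (congrFun hG.1 a) b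
    simpa [Matrix.conjTranspose_apply] using this.symm
  have hsym : ∀ u v : Fin N → ℝ, u ⬝ᵥ (G *ᵥ v) = v ⬝ᵥ (G *ᵥ u) := by
    intro u v
    simp only [dotProduct, mulVec, Finset.mul_sum]
    rw [Finset.sum_comm]
    refine Finset.sum_congr rfl fun a _ => Finset.sum_congr rfl fun b _ => ?_
    rw [hGs b a]; ring
  -- the set of points whose support contains that of zbar is open and contains (zbar, cbar)
  have hopen : IsOpen {p : (Fin N → ℝ) × ℝ | ∀ j, zbar j ≠ 0 → p.1 j ≠ 0} := by
    have : {p : (Fin N → ℝ) × ℝ | ∀ j, zbar j ≠ 0 → p.1 j ≠ 0} =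
        ⋂ j : Fin N, {p : (Fin N → ℝ) × ℝ | zbar j ≠ 0 → p.1 j ≠ 0} := by
      ext p; simp [Set.mem_iInter]
    rw [this]
    refine isOpen_iInter_of_finite fun j => ?_
    by_cases hj : zbar j = 0
    · simp [hj]
    · have : {p : (Fin N → ℝ) × ℝ | zbar j ≠ 0 → p.1 j ≠ 0} =
          {p : (Fin N → ℝ) × ℝ | p.1 j ≠ 0} := by
        ext p; simp [hj]
      rw [this]
      have hc : Continuous fun p : (Fin N → ℝ) × ℝ => p.1 j :=
        (continuous_apply j).comp continuous_fst
      exact isOpen_compl_iff.mpr (isClosed_eq hc continuous_const)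
  have hmem : {p : (Fin N → ℝ) × ℝ | ∀ j, zbar j ≠ 0 → p.1 j ≠ 0} ∈
      nhds ((zbar, cbar) : (Fin N → ℝ) × ℝ) :=
    hopen.mem_nhds fun j hj => hj
  have hev : ∀ᶠ p in nhdsWithin ((zbar, cbar) : (Fin N → ℝ) × ℝ)
      {p : (Fin N → ℝ) × ℝ | (Finset.univ.filter fun j => p.1 j ≠ 0).card ≤ k},
      ∀ j, zbar j ≠ 0 → p.1 j ≠ 0 :=
    Filter.Eventually.filter_mono nhdsWithin_le_nhds hmem
  show ∀ᶠ p in _, _ ≤ _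
  filter_upwards [hev, self_mem_nhdsWithin] with p hsub hpk
    -- supports coincide
  have hset : (Finset.univ.filter fun j => zbar j ≠ 0) =
      (Finset.univ.filter fun j => p.1 j ≠ 0) := by
    apply Finset.eq_of_subset_of_card_le
    · intro j hj
      simp only [Finset.mem_filter, Finset.mem_univ, true_and] at hj ⊢
      exact hsub j hj
    · rw [hsupp]; exact hpk
  have hz0 : ∀ j, zbar j = 0 → p.1 j = 0 := by
    intro j hj
    by_contra h
    have : j ∈ Finset.univ.filter fun j => p.1 j ≠ 0 := by
      simp [h]
    rw [← hset] at this
    simp only [Finset.mem_filter, Finset.mem_univ, true_and] at this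
    exact this hj
  set z := p.1 with hz
  set c := p.2 with hc'
  set d : Fin N → ℝ := fun j => z j - zbar j with hd
  set δ : ℝ := c - cbar with hδ
  have hzeq : z = zbar + d := by funext j; simp [hd]
  -- quadratic expansion
  have h1 : z ⬝ᵥ (G *ᵥ z) =
      zbar ⬝ᵥ (G *ᵥ zbar) + 2 * (d ⬝ᵥ (G *ᵥ zbar)) + d ⬝ᵥ (G *ᵥ d) := by
    rw [hzeq, mulVec_add, dotProduct_add, add_dotProduct, add_dotProduct,
      hsym zbar d]
    ring
  -- residual expansion
  have h2 : ∀ i, 1 - y i * (z ⬝ᵥ r i + c) = ξbar i - y i * (d ⬝ᵥ r i + δ) := by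
    intro i
    have : z ⬝ᵥ r i = zbar ⬝ᵥ r i + d ⬝ᵥ r i := by
      rw [hzeq, add_dotProduct]
    rw [this, hξ i, hδ]
    ring
  -- y i squared is 1
  have hy2 : ∀ i, y i ^ 2 = 1 := by
    intro i; rcases hy i with h | h <;> rw [h] <;> norm_num
  have h3 : ∀ i, (ξbar i - y i * (d ⬝ᵥ r i + δ)) ^ 2 =
      ξbar i ^ 2 - 2 * (ξbar i * y i * (d ⬝ᵥ r i + δ)) + (d ⬝ᵥ r i + δ) ^ 2 := by
    intro i
    have := hy2 i
    nlinarith [hy2 i]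
  -- the cross term with δ vanishes
  have h5 : ∑ i, ξbar i * y i * (d ⬝ᵥ r i + δ) = ∑ i, ξbar i * y i * (d ⬝ᵥ r i) := by
    have e : ∀ i, ξbar i * y i * (d ⬝ᵥ r i + δ) =
        ξbar i * y i * (d ⬝ᵥ r i) + (y i * ξbar i) * δ := by
      intro i; ring
    simp_rw [e]
    rw [Finset.sum_add_distrib, ← Finset.sum_mul, hsum, zero_mul, add_zero]
  -- stationarity kills the linear term
  have h4 : d ⬝ᵥ (G *ᵥ zbar) = 2 * C * ∑ i, ξbar i * y i * (d ⬝ᵥ r i) := by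
    have step1 : d ⬝ᵥ (G *ᵥ zbar) =
        ∑ j, d j * (2 * C * ∑ i, ξbar i * y i * r i j) := by
      simp only [dotProduct]
      refine Finset.sum_congr rfl fun j _ => ?_
      by_cases hj : zbar j = 0
      · have hdj : d j = 0 := by simp [hd, hz0 j hj, hj]
        rw [hdj, zero_mul, zero_mul]
      · rw [hstat j hj]
    rw [step1]
    simp only [dotProduct, Finset.mul_sum]
    rw [Finset.sum_comm]
    refine Finset.sum_congr rfl fun i _ => Finset.sum_congr rfl fun j _ => ?_
    ring
  -- nonnegativity
  have q1 : 0 ≤ d ⬝ᵥ (G *ᵥ d) := by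
    have := hG.dotProduct_mulVec_nonneg d
    simpa using this
  have q2 : 0 ≤ ∑ i, (d ⬝ᵥ r i + δ) ^ 2 :=
    Finset.sum_nonneg fun i _ => sq_nonneg _
  -- assemble
  have hfb : ∀ i, 1 - y i * (zbar ⬝ᵥ r i + cbar) = ξbar i := fun i => (hξ i).symm
  simp_rw [hfb]
  have hsumexp : ∑ i, (1 - y i * (z ⬝ᵥ r i + c)) ^ 2 =
      ∑ i, ξbar i ^ 2 - 2 * ∑ i, ξbar i * y i * (d ⬝ᵥ r i + δ)
        + ∑ i, (d ⬝ᵥ r i + δ) ^ 2 := by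
    simp_rw [h2, h3]
    rw [Finset.sum_add_distrib, Finset.sum_sub_distrib, Finset.mul_sum]
  rw [hsumexp, h5, h1]
  nlinarith [mul_nonneg hC.le q2, mul_nonneg hC.le q2]
end

section
/- Let k ≤ N. Suppose z̄ ∈ ℝ^N with ‖z̄‖₀ = k, c̄ ∈ ℝ, and ξ̄ ∈ ℝ^m satisfy y_i(z̄^⊤ r_i + c̄) ≥ 1 − ξ̄_i and ξ̄_i ≥ 0 for all i ∈ [m], and suppose there exist λ, λ̄ ∈ ℝ^m with λ_i ≥ 0 and λ̄_i ≥ 0 such that: (G z̄)_j = ∑_{i=1}^m λ_i y_i (r_i)_j for every index j with z̄_j ≠ 0; ∑_{i=1}^m λ_i y_i = 0; λ_i + λ̄_i = C for all i; λ_i (y_i(z̄^⊤ r_i + c̄) − 1 + ξ̄_i) = 0 for all i; and λ̄_i ξ̄_i = 0 for all i. Then (z̄, c̄, ξ̄) is a local minimizer of (1/2) z^⊤ G z + C ∑_{i=1}^m ξ_i over the set {(z, c, ξ) ∈ ℝ^N × ℝ × ℝ^m : y_i(z^⊤ r_i + c) ≥ 1 − ξ_i and ξ_i ≥ 0 for all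 i, and ‖z‖₀ ≤ k}. -/
open Matrix Finset

/-- If `(z̄, c̄, ξ̄)` with `‖z̄‖₀ = k` is feasible for the hinge-loss
`ℓ₀`-regularized QSVM and satisfies the Lu–Zhang (KKT-type) stationarity conditions
with multipliers `λ, λ̄ ≥ 0`, then `(z̄, c̄, ξ̄)` is a local minimizer of
`(1/2) zᵀGz + C ∑ ξ_i` over the set of feasible points with `‖z‖₀ ≤ k`. -/
theorem lu_zhang_stationary_is_local_min_hinge
    (m N k : ℕ) (hm : 1 ≤ m) (hN : 1 ≤ N) (hk : k ≤ N)
    (r : Fin m → Fin N → ℝ) (y : Fin m → ℝ) (hy : ∀ i, y i = 1 ∨ y i = -1)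
    (G : Matrix (Fin N) (Fin N) ℝ) (hG : G.PosSemidef)
    (C : ℝ) (hC : 0 < C)
    (zbar : Fin N → ℝ) (cbar : ℝ) (ξbar : Fin m → ℝ)
    (hsupp : (Finset.univ.filter fun j => zbar j ≠ 0).card = k)
    (hfeas : ∀ i, 1 - ξbar i ≤ y i * (zbar ⬝ᵥ r i + cbar) ∧ 0 ≤ ξbar i)
    (lam lamBar : Fin m → ℝ)
    (hlam : ∀ i, 0 ≤ lam i) (hlamBar : ∀ i, 0 ≤ lamBar i)
    (hstat : ∀ j, zbar j ≠ 0 → (G *ᵥ zbar) j = ∑ i, lam i * y i * r i j)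
    (hsumlam : ∑ i, lam i * y i = 0)
    (hC_split : ∀ i, lam i + lamBar i = C)
    (hcomp1 : ∀ i, lam i * (y i * (zbar ⬝ᵥ r i + cbar) - 1 + ξbar i) = 0)
    (hcomp2 : ∀ i, lamBar i * ξbar i = 0) :
    IsLocalMinOn
      (fun p : (Fin N → ℝ) × ℝ × (Fin m → ℝ) =>
        (1 / 2) * (p.1 ⬝ᵥ (G *ᵥ p.1)) + C * ∑ i, p.2.2 i)
      {p : (Fin N → ℝ) × ℝ × (Fin m → ℝ) |
        (∀ i, 1 - p.2.2 i ≤ y i * (p.1 ⬝ᵥ r i + p.2.1) ∧ 0 ≤ p.2.2 i) ∧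
        (Finset.univ.filter fun j => p.1 j ≠ 0).card ≤ k}
      (zbar, cbar, ξbar) := by
  classical
  -- symmetry of the quadratic form
  have hsym : ∀ u v : Fin N → ℝ, u ⬝ᵥ (G *ᵥ v) = v ⬝ᵥ (G *ᵥ u) := by
    intro u v
    have hs : Gᵀ = G := by
      have := hG.1
      rwa [Matrix.IsHermitian, Matrix.conjTranspose_eq_transpose_of_trivial] at this
    rw [Matrix.dotProduct_mulVec, ← Matrix.mulVec_transpose, hs, dotProduct_comm]
  have hpsd : ∀ u : Fin N → ℝ, 0 ≤ u ⬝ᵥ (G *ᵥ u) := fun u => by simpa using hG.dotProduct_mulVec_nonneg u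
  -- the open neighborhood where the support cannot shrink
  set U : Set ((Fin N → ℝ) × ℝ × (Fin m → ℝ)) :=
    {p | ∀ j, zbar j ≠ 0 → p.1 j ≠ 0} with hUdef
  have hUopen : IsOpen U := by
    have : U = ⋂ j : Fin N, {p : (Fin N → ℝ) × ℝ × (Fin m → ℝ) | zbar j ≠ 0 → p.1 j ≠ 0} := by
      ext p; simp [hUdef, Set.mem_iInter]
    rw [this]
    refine isOpen_iInter_of_finite fun j => ?_
    by_cases hz : zbar j = 0
    · simp [hz]
    · have : {p : (Fin N → ℝ) × ℝ × (Fin m → ℝ) | zbar j ≠ 0 → p.1 j ≠ 0}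
          = (fun p : (Fin N → ℝ) × ℝ × (Fin m → ℝ) => p.1 j) ⁻¹' ({0}ᶜ) := by
        ext p; simp [hz]
      rw [this]
      exact (isOpen_compl_singleton).preimage ((continuous_apply j).comp continuous_fst)
  have hUmem : U ∈ nhds (zbar, cbar, ξbar) :=
    hUopen.mem_nhds (by intro j hj; exact hj)
  refine Filter.eventually_iff_exists_mem.mpr ?_
  refine ⟨U ∩ {p : (Fin N → ℝ) × ℝ × (Fin m → ℝ) |
        (∀ i, 1 - p.2.2 i ≤ y i * (p.1 ⬝ᵥ r i + p.2.1) ∧ 0 ≤ p.2.2 i) ∧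
        (Finset.univ.filter fun j => p.1 j ≠ 0).card ≤ k},
    Filter.inter_mem (mem_nhdsWithin_of_mem_nhds hUmem) self_mem_nhdsWithin, ?_⟩
  rintro ⟨z, c, ξ⟩ ⟨hU', hfeas', hcard⟩
  simp only [Set.mem_setOf_eq] at hU' hfeas' hcard
  dsimp only
  -- support rigidity: z vanishes wherever zbar does
  have hzero : ∀ j, zbar j = 0 → z j = 0 := by
    intro j hj
    by_contra hzj
    have hsub : (Finset.univ.filter fun j => zbar j ≠ 0) ⊆
        (Finset.univ.filter fun j => z j ≠ 0) := by
      intro a ha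
      simp only [Finset.mem_filter, Finset.mem_univ, true_and] at ha ⊢
      exact hU' a ha
    have heq : (Finset.univ.filter fun j => zbar j ≠ 0) =
        (Finset.univ.filter fun j => z j ≠ 0) :=
      Finset.eq_of_subset_of_card_le hsub (by rw [hsupp]; exact hcard)
    have : j ∈ (Finset.univ.filter fun j => zbar j ≠ 0) := by
      rw [heq]; simp [hzj]
    simp only [Finset.mem_filter] at this
    exact this.2 hj
  set w : Fin N → ℝ := z - zbar with hw
  -- expansion of the quadratic form
  have hexp : z ⬝ᵥ (G *ᵥ z) = zbar ⬝ᵥ (G *ᵥ zbar) + 2 * (w ⬝ᵥ (G *ᵥ zbar)) + w ⬝ᵥ (G *ᵥ w) := by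
    have hz : z = zbar + w := by simp [hw]
    rw [hz, Matrix.mulVec_add, dotProduct_add, add_dotProduct,
      add_dotProduct, hsym zbar w]
    ring
  -- stationarity yields the key linear identity
  have hD : w ⬝ᵥ (G *ᵥ zbar) = ∑ i, lam i * y i * (w ⬝ᵥ r i) := by
    have h1 : w ⬝ᵥ (G *ᵥ zbar) = ∑ j, w j * (G *ᵥ zbar) j := by
      simp [dotProduct]
    rw [h1]
    have h2 : ∀ j, w j * (G *ᵥ zbar) j = ∑ i, lam i * y i * r i j * w j := by
      intro j
      by_cases hj : zbar j = 0
      · have hwj : w j = 0 := by simp [hw, hzero j hj, hj]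
        simp [hwj]
      · rw [hstat j hj, Finset.mul_sum]
        exact Finset.sum_congr rfl fun i _ => by ring
    rw [Finset.sum_congr rfl fun j _ => h2 j, Finset.sum_comm]
    refine Finset.sum_congr rfl fun i _ => ?_
    rw [dotProduct, Finset.mul_sum]
    exact Finset.sum_congr rfl fun j _ => by ring
  -- per-index inequality from complementarity and feasibility
  have hDge : ∑ i, lam i * y i * (w ⬝ᵥ r i) ≥ ∑ i, lam i * (ξbar i - ξ i) := by
    have key : ∀ i, lam i * (ξbar i - ξ i) - lam i * y i * (c - cbar)
        ≤ lam i * y i * (w ⬝ᵥ r i) := by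
      intro i
      have hwr : w ⬝ᵥ r i = z ⬝ᵥ r i - zbar ⬝ᵥ r i := by
        simp [hw, sub_dotProduct]
      have h1 : lam i * (1 - ξ i) ≤ lam i * (y i * (z ⬝ᵥ r i + c)) :=
        mul_le_mul_of_nonneg_left (hfeas' i).1 (hlam i)
      have h2 : lam i * (y i * (zbar ⬝ᵥ r i + cbar)) = lam i * (1 - ξbar i) := by
        linear_combination hcomp1 i
      rw [hwr]; ring_nf at h1 h2 ⊢; linarith [h1, h2]
    have hsum := Finset.sum_le_sum (s := Finset.univ) (fun i _ => key i)
    rw [Finset.sum_sub_distrib] at hsum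
    have hz : ∑ i, lam i * y i * (c - cbar) = 0 := by
      rw [← Finset.sum_mul, hsumlam]; ring
    linarith [hsum, hz]
  -- final slack inequality
  have hslack : ∑ i, lam i * (ξbar i - ξ i) + C * ∑ i, (ξ i - ξbar i) ≥ 0 := by
    have : ∀ i, lam i * (ξbar i - ξ i) + C * (ξ i - ξbar i) = lamBar i * ξ i - lamBar i * ξbar i := by
      intro i
      linear_combination (ξbar i - ξ i) * hC_split i
    calc ∑ i, lam i * (ξbar i - ξ i) + C * ∑ i, (ξ i - ξbar i)
        = ∑ i, (lam i * (ξbar i - ξ i) + C * (ξ i - ξbar i)) := by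
          rw [Finset.sum_add_distrib, Finset.mul_sum]
      _ = ∑ i, (lamBar i * ξ i - lamBar i * ξbar i) :=
          Finset.sum_congr rfl fun i _ => this i
      _ = ∑ i, lamBar i * ξ i := by
          refine Finset.sum_congr rfl fun i _ => ?_
          rw [hcomp2 i]; ring
      _ ≥ 0 := Finset.sum_nonneg fun i _ => mul_nonneg (hlamBar i) (hfeas' i).2
  have hpsdw : 0 ≤ w ⬝ᵥ (G *ᵥ w) := hpsd w
  have hsumdiff : C * ∑ i, (ξ i - ξbar i) = C * ∑ i, ξ i - C * ∑ i, ξbar i := by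
    rw [Finset.sum_sub_distrib]; ring
  linarith [hexp, hD, hDge, hslack, hpsdw, hsumdiff]
end
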